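/- Let U be a 2-dimensional linear subspace of Minkowski space ℝ⁴ that is null in the sense that U ∩ U^⊥ ≠ {0}, where U^⊥ = {w ∈ ℝ⁴ : η(u,w) = 0 for all u ∈ U}. Then the set of alternating (skew-symmetric) bilinear forms F on ℝ⁴ satisfying F(u,w) = 0 for all u ∈ U and all w ∈ U^⊥ is a linear subspace of dimension 3 of the space of alternating bilinear forms on ℝ⁴. -/

import Mathlib

open Matrix Module

def eta (v w : Fin 4 → ℝ) : ℝ :=
  -(v 0 * w 0) + v 1 * w 1 + v 2 * w 2 + v 3 * w 3

section Helpers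

lemma eta_comm (x y : Fin 4 → ℝ) : eta x y = eta y x := by simp [eta]; ring

noncomputable def etaB : LinearMap.BilinForm ℝ (Fin 4 → ℝ) :=
  LinearMap.mk₂ ℝ eta
    (by intros; simp [eta]; ring) (by intros; simp [eta]; ring)
    (by intros; simp [eta]; ring) (by intros; simp [eta]; ring)

@[simp] lemma etaB_apply (v w : Fin 4 → ℝ) : etaB v w = eta v w := rfl

lemma etaB_refl : etaB.IsRefl := by
  intro x y h
  simp only [etaB_apply] at h ⊢
  rw [eta_comm]; exact h

lemma etaB_nondeg : etaB.Nondegenerate := by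
  refine (LinearMap.IsRefl.nondegenerate_iff_separatingLeft etaB_refl).mpr ?_
  intro m h
  funext i
  fin_cases i
  · have := h ![1,0,0,0]; simp [eta] at this; simpa using this
  · have := h ![0,1,0,0]; simp [eta] at this; simpa using this
  · have := h ![0,0,1,0]; simp [eta] at this; simpa using this
  · have := h ![0,0,0,1]; simp [eta] at this; simpa using this

lemma null_parallel {a b : Fin 4 → ℝ} (ha : eta a a = 0) (hb : eta b b = 0)
    (hab : eta a b = 0) (hb0 : b ≠ 0) : ∃ t : ℝ, a = t • b := by
  have hb00 : b 0 ≠ 0 := by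
    intro h0
    apply hb0
    have hs : b 1 ^ 2 + b 2 ^ 2 + b 3 ^ 2 = 0 := by
      simp only [eta, h0] at hb; nlinarith [hb]
    have e1 : b 1 = 0 := by nlinarith [sq_nonneg (b 1), sq_nonneg (b 2), sq_nonneg (b 3)]
    have e2 : b 2 = 0 := by nlinarith [sq_nonneg (b 1), sq_nonneg (b 2), sq_nonneg (b 3)]
    have e3 : b 3 = 0 := by nlinarith [sq_nonneg (b 1), sq_nonneg (b 2), sq_nonneg (b 3)]
    funext i
    fin_cases i
    · exact h0
    · exact e1
    · exact e2
    · exact e3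
  refine ⟨a 0 / b 0, ?_⟩
  have hs : (b 0 * a 1 - a 0 * b 1) ^ 2 + (b 0 * a 2 - a 0 * b 2) ^ 2
      + (b 0 * a 3 - a 0 * b 3) ^ 2 = 0 := by
    simp only [eta] at ha hb hab
    linear_combination b 0 ^ 2 * ha - 2 * a 0 * b 0 * hab + a 0 ^ 2 * hb
  have h1 : b 0 * a 1 - a 0 * b 1 = 0 := by
    nlinarith [sq_nonneg (b 0 * a 1 - a 0 * b 1), sq_nonneg (b 0 * a 2 - a 0 * b 2),
      sq_nonneg (b 0 * a 3 - a 0 * b 3)]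
  have h2 : b 0 * a 2 - a 0 * b 2 = 0 := by
    nlinarith [sq_nonneg (b 0 * a 1 - a 0 * b 1), sq_nonneg (b 0 * a 2 - a 0 * b 2),
      sq_nonneg (b 0 * a 3 - a 0 * b 3)]
  have h3 : b 0 * a 3 - a 0 * b 3 = 0 := by
    nlinarith [sq_nonneg (b 0 * a 1 - a 0 * b 1), sq_nonneg (b 0 * a 2 - a 0 * b 2),
      sq_nonneg (b 0 * a 3 - a 0 * b 3)]
  funext i
  fin_cases i
  · show a 0 = (a 0 / b 0) * b 0
    field_simp
  · show a 1 = (a 0 / b 0) * b 1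
    field_simp; linear_combination h1
  · show a 2 = (a 0 / b 0) * b 2
    field_simp; linear_combination h2
  · show a 3 = (a 0 / b 0) * b 3
    field_simp; linear_combination h3

noncomputable def psi : (Fin 3 → ℝ) →ₗ[ℝ] Matrix (Fin 4) (Fin 4) ℝ where
  toFun c := !![0, c 0, c 1, c 2; -c 0, 0, 0, 0; -c 1, 0, 0, 0; -c 2, 0, 0, 0]
  map_add' x y := by
    ext i j; fin_cases i <;> fin_cases j <;> simp [Matrix.vecHead, Matrix.vecTail] <;> try ring
  map_smul' t x := by
    ext i j; fin_cases i <;> fin_cases j <;> simp [Matrix.vecHead, Matrix.vecTail] <;> try ring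

lemma psi_inj : Function.Injective psi := by
  intro c d h
  funext i
  fin_cases i
  · have := congrFun (congrFun h 0) 1; simpa [psi, Matrix.vecHead, Matrix.vecTail] using this
  · have := congrFun (congrFun h 0) 2; simpa [psi, Matrix.vecHead, Matrix.vecTail] using this
  · have := congrFun (congrFun h 0) 3; simpa [psi, Matrix.vecHead, Matrix.vecTail] using this

lemma mem_range_psi (G : Matrix (Fin 4) (Fin 4) ℝ) :
    G ∈ LinearMap.range psi ↔ Gᵀ = -G ∧ G 2 1 = 0 ∧ G 3 1 = 0 ∧ G 2 3 = 0 := by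
  constructor
  · rintro ⟨c, rfl⟩
    refine ⟨?_, ?_, ?_, ?_⟩
    · ext i j; fin_cases i <;> fin_cases j <;> simp [psi, Matrix.vecHead, Matrix.vecTail]
    · simp [psi, Matrix.vecHead, Matrix.vecTail]
    · simp [psi, Matrix.vecHead, Matrix.vecTail]
    · simp [psi, Matrix.vecHead, Matrix.vecTail]
  · rintro ⟨hsk, h21, h31, h23⟩
    have hsymm : ∀ i j, G i j = -(G j i) := fun i j => by
      have := congrFun (congrFun hsk j) i
      simpa [Matrix.transpose_apply, Matrix.neg_apply] using this
    refine ⟨![G 0 1, G 0 2, G 0 3], ?_⟩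
    ext i j
    fin_cases i <;> fin_cases j <;>
      simp [psi, Matrix.vecHead, Matrix.vecTail] <;>
      linarith [hsymm 0 0, hsymm 1 1, hsymm 2 2, hsymm 3 3, hsymm 0 1, hsymm 0 2,
        hsymm 0 3, hsymm 1 2, hsymm 1 3, hsymm 2 3, h21, h31, h23]

lemma finrank_range_psi : Module.finrank ℝ (LinearMap.range psi) = 3 := by
  rw [LinearMap.finrank_range_of_inj psi_inj]
  simp

def conjL (Q : Matrix (Fin 4) (Fin 4) ℝ) :
    Matrix (Fin 4) (Fin 4) ℝ →ₗ[ℝ] Matrix (Fin 4) (Fin 4) ℝ where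
  toFun F := Q * F * Qᵀ
  map_add' F G := by simp [Matrix.mul_add, Matrix.add_mul]
  map_smul' t F := by simp [Matrix.mul_smul, Matrix.smul_mul]

@[simp] lemma conjL_apply (Q F : Matrix (Fin 4) (Fin 4) ℝ) : conjL Q F = Q * F * Qᵀ := rfl

noncomputable def conjE (Q : Matrix (Fin 4) (Fin 4) ℝ) (hQ : IsUnit Q.det) :
    Matrix (Fin 4) (Fin 4) ℝ ≃ₗ[ℝ] Matrix (Fin 4) (Fin 4) ℝ := by
  have h1 : Q * Q⁻¹ = 1 := Matrix.mul_nonsing_inv _ hQ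
  have h2 : Q⁻¹ * Q = 1 := Matrix.nonsing_inv_mul _ hQ
  have h3 : Q⁻¹ᵀ * Qᵀ = 1 := by rw [← Matrix.transpose_mul, h1, Matrix.transpose_one]
  have h4 : Qᵀ * Q⁻¹ᵀ = 1 := by rw [← Matrix.transpose_mul, h2, Matrix.transpose_one]
  exact LinearEquiv.ofLinear (conjL Q) (conjL Q⁻¹)
    (LinearMap.ext fun G => by
      simp only [LinearMap.comp_apply, conjL_apply, LinearMap.id_apply]
      simp only [Matrix.mul_assoc]
      rw [h3, Matrix.mul_one, ← Matrix.mul_assoc, h1, Matrix.one_mul])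
    (LinearMap.ext fun G => by
      simp only [LinearMap.comp_apply, conjL_apply, LinearMap.id_apply]
      simp only [Matrix.mul_assoc]
      rw [h4, Matrix.mul_one, ← Matrix.mul_assoc, h2, Matrix.one_mul])

@[simp] lemma conjE_apply (Q : Matrix (Fin 4) (Fin 4) ℝ) (hQ : IsUnit Q.det)
    (F : Matrix (Fin 4) (Fin 4) ℝ) : conjE Q hQ F = Q * F * Qᵀ := rfl

lemma conj_entry (b : Fin 4 → Fin 4 → ℝ) (F : Matrix (Fin 4) (Fin 4) ℝ) (i j : Fin 4) :
    ((Matrix.of b) * F * (Matrix.of b)ᵀ) i j = b i ⬝ᵥ F.mulVec (b j) := by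
  simp [Matrix.mul_apply, Matrix.mulVec, dotProduct, Fin.sum_univ_four,
    Finset.mul_sum, Finset.sum_mul]
  ring

end Helpers

theorem stmt11 (U : Submodule ℝ (Fin 4 → ℝ)) (hdim : Module.finrank ℝ U = 2)
    (hnull : ∃ v : Fin 4 → ℝ, v ∈ U ∧ v ≠ 0 ∧ ∀ u ∈ U, eta u v = 0) :
    ∃ S : Submodule ℝ (Matrix (Fin 4) (Fin 4) ℝ),
      (S : Set (Matrix (Fin 4) (Fin 4) ℝ)) =
        {F | Fᵀ = -F ∧ ∀ u ∈ U, ∀ w : Fin 4 → ℝ,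
          (∀ u' ∈ U, eta u' w = 0) → u ⬝ᵥ F.mulVec w = 0} ∧
      Module.finrank ℝ S = 3 := by
  classical
  obtain ⟨v, hvU, hv0, hvperp⟩ := hnull
  have hvv : eta v v = 0 := hvperp v hvU
  have hfr4 : finrank ℝ (Fin 4 → ℝ) = 4 := by simp
  -- pick u₂ ∈ U outside span {v}
  have hUnotle : ¬ (U ≤ Submodule.span ℝ {v}) := by
    intro hle
    have h1 : finrank ℝ (Submodule.span ℝ {v} : Submodule ℝ (Fin 4 → ℝ)) = 1 :=
      finrank_span_singleton hv0
    have := Submodule.finrank_mono hle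
    omega
  obtain ⟨u₂, hu₂U, hu₂v⟩ := SetLike.not_le_iff_exists.mp hUnotle
  have hrange1 : Set.range ![v] = {v} := by
    ext x; simp [Fin.exists_fin_one]
  have hliv : LinearIndependent ℝ ![v] := linearIndependent_unique_iff.mpr (by simpa using hv0)
  have hli2 : LinearIndependent ℝ ![u₂, v] := by
    apply linearIndependent_fin_cons.mpr
    exact ⟨hliv, by rw [hrange1]; exact hu₂v⟩
  have hrange2 : Set.range ![u₂, v] = {u₂, v} := by
    ext x; simp [Fin.exists_fin_two]; tauto
  have hU : U = Submodule.span ℝ ({u₂, v} : Set (Fin 4 → ℝ)) := by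
    refine (Submodule.eq_of_le_of_finrank_le ?_ ?_).symm
    · rw [Submodule.span_le]
      rintro x (rfl | rfl)
      · exact hu₂U
      · exact hvU
    · rw [hdim, ← hrange2]
      have := finrank_span_eq_card hli2
      simp at this
      omega
  -- the orthogonal complement
  set Up : Submodule ℝ (Fin 4 → ℝ) := etaB.orthogonal U with hUpdef
  have hmemUp : ∀ x, x ∈ Up ↔ ∀ u ∈ U, eta u x = 0 := by
    intro x
    rw [hUpdef, LinearMap.BilinForm.mem_orthogonal_iff]
    rfl
  have hfrUp : finrank ℝ Up = 2 := by
    rw [hUpdef, LinearMap.BilinForm.finrank_orthogonal etaB_nondeg, hdim, hfr4]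
  have hvUp : v ∈ Up := (hmemUp v).mpr hvperp
  -- pick w₂ ∈ Up outside span {v}
  have hUpnotle : ¬ (Up ≤ Submodule.span ℝ {v}) := by
    intro hle
    have h1 : finrank ℝ (Submodule.span ℝ {v} : Submodule ℝ (Fin 4 → ℝ)) = 1 :=
      finrank_span_singleton hv0
    have := Submodule.finrank_mono hle
    omega
  obtain ⟨w₂, hw₂Up, hw₂v⟩ := SetLike.not_le_iff_exists.mp hUpnotle
  have hw₂perp : ∀ u ∈ U, eta u w₂ = 0 := (hmemUp w₂).mp hw₂Up
  have hw₂U : w₂ ∉ U := by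
    intro hmem
    have h1 : eta w₂ w₂ = 0 := hw₂perp w₂ hmem
    have h2 : eta w₂ v = 0 := hvperp w₂ hmem
    obtain ⟨t, rfl⟩ := null_parallel h1 hvv h2 hv0
    exact hw₂v (Submodule.mem_span_singleton.mpr ⟨t, rfl⟩)
  have hli2' : LinearIndependent ℝ ![w₂, v] := by
    apply linearIndependent_fin_cons.mpr
    exact ⟨hliv, by rw [hrange1]; exact hw₂v⟩
  have hrange2' : Set.range ![w₂, v] = {w₂, v} := by
    ext x; simp [Fin.exists_fin_two]; tauto
  have hUp2 : Up = Submodule.span ℝ ({w₂, v} : Set (Fin 4 → ℝ)) := by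
    refine (Submodule.eq_of_le_of_finrank_le ?_ ?_).symm
    · rw [Submodule.span_le]
      rintro x (rfl | rfl)
      · exact hw₂Up
      · exact hvUp
    · rw [hfrUp, ← hrange2']
      have := finrank_span_eq_card hli2'
      simp at this
      omega
  -- independence of the three vectors
  have hli3 : LinearIndependent ℝ ![w₂, u₂, v] := by
    apply linearIndependent_fin_cons.mpr
    refine ⟨hli2, ?_⟩
    rw [hrange2, ← hU]
    exact hw₂U
  -- the fourth basis vector
  have hz : ∃ z, z ∉ Submodule.span ℝ (Set.range ![w₂, u₂, v]) := by
    by_contra hcon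
    push_neg at hcon
    have htop : (⊤ : Submodule ℝ (Fin 4 → ℝ)) ≤ Submodule.span ℝ (Set.range ![w₂, u₂, v]) :=
      fun x _ => hcon x
    have h3 := finrank_span_eq_card hli3
    simp at h3
    have := Submodule.finrank_mono htop
    rw [finrank_top, hfr4, h3] at this
    omega
  obtain ⟨z, hzsp⟩ := hz
  have hli4 : LinearIndependent ℝ ![z, w₂, u₂, v] :=
    linearIndependent_fin_cons.mpr ⟨hli3, hzsp⟩
  -- the matrix with these rows
  set b : Fin 4 → (Fin 4 → ℝ) := ![z, w₂, u₂, v] with hbdef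
  set Q : Matrix (Fin 4) (Fin 4) ℝ := Matrix.of b with hQdef
  have hQu : IsUnit Q := Matrix.linearIndependent_rows_iff_isUnit.mp hli4
  have hQd : IsUnit Q.det := (Matrix.isUnit_iff_isUnit_det _).mp hQu
  set e := conjE Q hQd with hedef
  have hent : ∀ (F : Matrix (Fin 4) (Fin 4) ℝ) (i j : Fin 4),
      (Q * F * Qᵀ) i j = b i ⬝ᵥ F.mulVec (b j) := fun F i j => conj_entry b F i j
  have hb1 : b 1 = w₂ := rfl
  have hb2 : b 2 = u₂ := rfl
  have hb3 : b 3 = v := rfl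
  refine ⟨(LinearMap.range psi).comap e.toLinearMap, ?_, ?_⟩
  · ext F
    simp only [SetLike.mem_coe, Submodule.mem_comap, LinearEquiv.coe_coe, Set.mem_setOf_eq]
    rw [show e F = Q * F * Qᵀ from rfl, mem_range_psi]
    constructor
    · rintro ⟨hsk, h21, h31, h23⟩
      rw [hent, hb2, hb1] at h21
      rw [hent, hb3, hb1] at h31
      rw [hent, hb2, hb3] at h23
      have h33 : v ⬝ᵥ F.mulVec v = 0 := by
        have hdd := congrFun (congrFun hsk 3) 3
        simp only [Matrix.transpose_apply, Matrix.neg_apply] at hdd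
        rw [hent, hb3] at hdd
        linarith only [hdd]
      constructor
      · apply (conjE Q hQd).injective
        show Q * Fᵀ * Qᵀ = Q * (-F) * Qᵀ
        have hT : Q * Fᵀ * Qᵀ = (Q * F * Qᵀ)ᵀ := by
          rw [Matrix.transpose_mul, Matrix.transpose_mul, Matrix.transpose_transpose,
            Matrix.mul_assoc]
        rw [hT, hsk]
        simp [Matrix.mul_neg, Matrix.neg_mul]
      · intro u huU w hw
        have hwUp : w ∈ Up := (hmemUp w).mpr hw
        rw [hU, Submodule.mem_span_pair] at huU
        rw [hUp2, Submodule.mem_span_pair] at hwUp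
        obtain ⟨p, q, rfl⟩ := huU
        obtain ⟨r, s, rfl⟩ := hwUp
        simp only [Matrix.mulVec_add, Matrix.mulVec_smul, add_dotProduct,
          smul_dotProduct, dotProduct_add, dotProduct_smul,
          h21, h31, h23, h33, smul_eq_mul, mul_zero, add_zero, zero_add]
    · rintro ⟨hsk, hvan⟩
      have h21 : (Q * F * Qᵀ) 2 1 = 0 := by
        rw [hent, hb2, hb1]; exact hvan u₂ hu₂U w₂ hw₂perp
      have h31 : (Q * F * Qᵀ) 3 1 = 0 := by
        rw [hent, hb3, hb1]; exact hvan v hvU w₂ hw₂perp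
      have h23 : (Q * F * Qᵀ) 2 3 = 0 := by
        rw [hent, hb2, hb3]; exact hvan u₂ hu₂U v hvperp
      refine ⟨?_, h21, h31, h23⟩
      rw [Matrix.transpose_mul, Matrix.transpose_mul, Matrix.transpose_transpose,
        Matrix.mul_assoc, hsk]
      simp [Matrix.mul_neg, Matrix.neg_mul, Matrix.mul_assoc]
  · rw [Submodule.comap_equiv_eq_map_symm, LinearEquiv.finrank_map_eq]
    exact finrank_range_psi
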